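/- Let a_{α,0} = 2Γ(2α)cos(πα)/(Γ(α)²cos(πα/2)²) for α ∈ (−1, 0). Then a_{α,0} = α + O(α³) as α → 0⁻; that is, there exist constants C > 0 and r > 0 such that |a_{α,0} − α| ≤ C·|α|³ for all α with −r < α < 0. -/

import Mathlib

open scoped Real

section AuxAcoeff

open Real

private lemma tan_cube_bound' {x : ℝ} (h0 : 0 ≤ x) (h1 : x ≤ 1) :
    |Real.tan x - x| ≤ 2 * x ^ 3 := by
  rcases eq_or_lt_of_le h0 with rfl | hx
  · simp
  have hclb : 1 - x ^ 2 / 2 ≤ Real.cos x := Real.one_sub_sq_div_two_le_cos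
  have hcpos : (1:ℝ)/2 ≤ Real.cos x := by nlinarith
  have hcne : Real.cos x ≠ 0 := by linarith
  have hsin1 : Real.sin x < x := Real.sin_lt hx
  have hsin2 : x - x ^ 3 / 4 < Real.sin x := by
    have := Real.sin_gt_sub_cube hx; nlinarith [pow_pos hx 3]
  have hcub : |Real.sin x - x| ≤ x ^ 3 / 4 := by
    rw [abs_le]; constructor <;> nlinarith
  have hc2 : |1 - Real.cos x| ≤ x ^ 2 / 2 := by
    have := Real.cos_le_one x
    rw [abs_le]; constructor <;> nlinarith
  have key : |Real.sin x - x * Real.cos x| ≤ 3/4 * x ^ 3 := by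
    have e : Real.sin x - x * Real.cos x = (Real.sin x - x) + x * (1 - Real.cos x) := by ring
    rw [e]
    refine (abs_add_le _ _).trans ?_
    rw [abs_mul, abs_of_pos hx]
    nlinarith
  have e2 : Real.tan x - x = (Real.sin x - x * Real.cos x) / Real.cos x := by
    rw [Real.tan_eq_sin_div_cos]; field_simp
  rw [e2, abs_div, abs_of_pos (by linarith : (0:ℝ) < Real.cos x)]
  rw [div_le_iff₀ (by linarith)]
  nlinarith

private lemma analyticAt_realGamma_one' : AnalyticAt ℝ Real.Gamma 1 := by
  have h1 : AnalyticAt ℂ Complex.Gamma 1 := by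
    refine DifferentiableOn.analyticAt (s := Metric.ball (1:ℂ) 1) ?_
      (Metric.ball_mem_nhds _ one_pos)
    intro z hz
    refine (Complex.differentiableAt_Gamma z ?_).differentiableWithinAt
    intro m hm
    rw [hm] at hz
    simp only [Metric.mem_ball, Complex.dist_eq] at hz
    have : ((-(m:ℂ)) - 1) = ((-(m:ℝ) - 1 : ℝ) : ℂ) := by push_cast; ring
    rw [this, Complex.norm_real, Real.norm_eq_abs,
      abs_of_nonpos (by nlinarith [Nat.cast_nonneg (α := ℝ) m])] at hz
    nlinarith [Nat.cast_nonneg (α := ℝ) m]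
  have h2 : AnalyticAt ℝ (fun x : ℝ => (Complex.Gamma (x : ℂ)).re) 1 := by
    have hof : AnalyticAt ℝ (fun x : ℝ => (x : ℂ)) 1 := Complex.ofRealCLM.analyticAt 1
    have hg : AnalyticAt ℝ Complex.Gamma ((1 : ℝ) : ℂ) := by
      simpa using h1.restrictScalars
    exact (Complex.reCLM.analyticAt _).comp (hg.comp hof)
  refine h2.congr ?_
  filter_upwards with x
  rw [Complex.Gamma_ofReal]
  simp

private noncomputable def Gq' : ℝ → ℝ :=
  fun α => Real.Gamma (1 - α) ^ 2 / Real.Gamma (1 - 2 * α)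

private lemma analyticAt_Gq' : AnalyticAt ℝ Gq' 0 := by
  have hf1 : AnalyticAt ℝ (fun α : ℝ => 1 - α) 0 := analyticAt_const.sub analyticAt_id
  have hf2 : AnalyticAt ℝ (fun α : ℝ => 1 - 2 * α) 0 :=
    analyticAt_const.sub (analyticAt_const.mul analyticAt_id)
  have e1 : ((fun α : ℝ => 1 - α) 0) = 1 := by norm_num
  have e2 : ((fun α : ℝ => 1 - 2 * α) 0) = 1 := by norm_num
  have a1 : AnalyticAt ℝ (fun α : ℝ => Real.Gamma (1 - α)) 0 :=
    AnalyticAt.comp (g := Real.Gamma)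
      (show AnalyticAt ℝ Real.Gamma ((fun α : ℝ => 1 - α) 0) by
        rw [e1]; exact analyticAt_realGamma_one') hf1
  have a2 : AnalyticAt ℝ (fun α : ℝ => Real.Gamma (1 - 2 * α)) 0 :=
    AnalyticAt.comp (g := Real.Gamma)
      (show AnalyticAt ℝ Real.Gamma ((fun α : ℝ => 1 - 2 * α) 0) by
        rw [e2]; exact analyticAt_realGamma_one') hf2
  exact (a1.pow 2).div a2 (by simp [Real.Gamma_one])

private lemma hasDerivAt_Gq' : HasDerivAt Gq' 0 0 := by
  have hγ := Real.hasDerivAt_Gamma_one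
  have hi1 : HasDerivAt (fun α : ℝ => 1 - α) (-1) 0 := by
    simpa using (hasDerivAt_id (0:ℝ)).const_sub 1
  have hi2 : HasDerivAt (fun α : ℝ => 1 - 2 * α) (-2) 0 := by
    simpa using ((hasDerivAt_id (0:ℝ)).const_mul 2).const_sub 1
  have hg1 : HasDerivAt Real.Gamma (-Real.eulerMascheroniConstant)
      ((fun α : ℝ => 1 - α) 0) := by simpa using hγ
  have hg2 : HasDerivAt Real.Gamma (-Real.eulerMascheroniConstant)
      ((fun α : ℝ => 1 - 2 * α) 0) := by simpa using hγ
  have h1 : HasDerivAt (fun α : ℝ => Real.Gamma (1 - α))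
      ((-Real.eulerMascheroniConstant) * (-1)) 0 := hg1.comp 0 hi1
  have h2 : HasDerivAt (fun α : ℝ => Real.Gamma (1 - 2 * α))
      ((-Real.eulerMascheroniConstant) * (-2)) 0 := by
    simpa [Function.comp_def] using hg2.comp 0 hi2
  have hsq := h1.pow 2
  have hdiv := hsq.div h2 (by simp [Real.Gamma_one])
  refine hdiv.congr_deriv ?_
  norm_num [Real.Gamma_one]
  ring

private lemma Gq'_zero : Gq' 0 = 1 := by simp [Gq', Real.Gamma_one]

private lemma Gq'_quad : ∃ c : ℝ, 0 < c ∧ ∃ r : ℝ, 0 < r ∧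
    ∀ y : ℝ, |y| < r → |Gq' y - 1| ≤ c * y ^ 2 := by
  obtain ⟨p, hp⟩ := analyticAt_Gq'
  have hps : ∀ y : ℝ, p.partialSum 2 y = 1 := by
    intro y
    have h0 : p 0 (fun _ => y) = 1 := by rw [hp.coeff_zero]; exact Gq'_zero
    have h1 : p 1 (fun _ => y) = y ^ 1 • p.coeff 1 :=
      FormalMultilinearSeries.apply_eq_pow_smul_coeff
    have hc1 : p.coeff 1 = 0 := by
      have h := hp.deriv
      rw [hasDerivAt_Gq'.deriv] at h
      rw [FormalMultilinearSeries.coeff]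
      exact h.symm
    have hsum : p.partialSum 2 y = (p 0 fun _ => y) + (p 1 fun _ => y) := by
      simp [FormalMultilinearSeries.partialSum, Finset.sum_range_succ]
    rw [hsum, h0, h1, hc1]
    simp
  have hb := hp.isBigO_sub_partialSum_pow 2
  rw [Asymptotics.isBigO_iff] at hb
  obtain ⟨c, hc⟩ := hb
  rw [Metric.eventually_nhds_iff] at hc
  obtain ⟨ε, hε, hball⟩ := hc
  refine ⟨max c 1, lt_of_lt_of_le one_pos (le_max_right _ _), ε, hε, fun y hy => ?_⟩
  have hy' : dist y 0 < ε := by simpa [Real.dist_eq] using hy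
  have h2 := hball hy'
  rw [zero_add, hps] at h2
  calc |Gq' y - 1| ≤ c * |y ^ 2| := by
        simpa [Real.norm_eq_abs, abs_abs, abs_pow, sq_abs] using h2
    _ ≤ max c 1 * y ^ 2 := by
        rw [abs_of_nonneg (sq_nonneg y)]
        exact mul_le_mul_of_nonneg_right (le_max_left _ _) (sq_nonneg y)

private lemma aCoeff_ident' {α : ℝ} (h1 : -(1/2 : ℝ) < α) (h2 : α < 0) :
    2 * Real.Gamma (2*α) * Real.cos (π * α) /
        (Real.Gamma α ^ 2 * Real.cos (π * α / 2) ^ 2)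
      = 2 / π * Real.tan (π * α / 2) * Gq' α := by
  have hπ := Real.pi_pos
  have hs1 : Real.sin (π * α) < 0 :=
    Real.sin_neg_of_neg_of_neg_pi_lt (by nlinarith) (by nlinarith)
  have hs2 : Real.sin (2 * (π * α)) < 0 :=
    Real.sin_neg_of_neg_of_neg_pi_lt (by nlinarith) (by nlinarith)
  have hc : 0 < Real.cos (π * α / 2) :=
    Real.cos_pos_of_mem_Ioo ⟨by nlinarith, by nlinarith⟩
  have hg1 : 0 < Real.Gamma (1 - α) := Real.Gamma_pos_of_pos (by linarith)
  have hg2 : 0 < Real.Gamma (1 - 2 * α) := Real.Gamma_pos_of_pos (by linarith)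
  have R1 := Real.Gamma_mul_Gamma_one_sub α
  have R2 := Real.Gamma_mul_Gamma_one_sub (2 * α)
  have e1 : Real.Gamma α = π / (Real.sin (π * α) * Real.Gamma (1 - α)) := by
    rw [eq_div_iff (mul_ne_zero hs1.ne hg1.ne')]
    rw [eq_div_iff hs1.ne] at R1
    linear_combination R1
  have e2 : Real.Gamma (2 * α) = π / (Real.sin (2 * (π * α)) * Real.Gamma (1 - 2 * α)) := by
    rw [eq_div_iff (mul_ne_zero hs2.ne hg2.ne')]
    rw [show π * (2 * α) = 2 * (π * α) by ring, eq_div_iff hs2.ne] at R2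
    linear_combination R2
  have t2 : Real.sin (2 * (π * α)) = 2 * Real.sin (π * α) * Real.cos (π * α) :=
    Real.sin_two_mul _
  have t1 : Real.sin (π * α) = 2 * Real.sin (π * α / 2) * Real.cos (π * α / 2) := by
    rw [← Real.sin_two_mul]
    congr 1
    ring
  have hcπ : Real.cos (π * α) ≠ 0 := by
    have : 0 < Real.cos (π * α) := Real.cos_pos_of_mem_Ioo ⟨by nlinarith, by nlinarith⟩
    exact this.ne'
  have hsin2ne : Real.sin (π * α / 2) ≠ 0 := by
    have : Real.sin (π * α / 2) < 0 :=
      Real.sin_neg_of_neg_of_neg_pi_lt (by nlinarith) (by nlinarith)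
    exact this.ne
  rw [show Gq' α = Real.Gamma (1 - α) ^ 2 / Real.Gamma (1 - 2 * α) from rfl]
  rw [e1, e2, Real.tan_eq_sin_div_cos, t2, t1]
  field_simp

end AuxAcoeff

/-- The expansion `a_{α,0} = α + O(α³)` as `α → 0⁻`, where
`a_{α,0} = 2Γ(2α)cos(πα)/(Γ(α)²cos(πα/2)²)`. -/
theorem aCoeff_expansion_at_zero :
    ∃ C : ℝ, 0 < C ∧ ∃ r : ℝ, 0 < r ∧ ∀ α : ℝ, -r < α → α < 0 →
      |2 * Real.Gamma (2*α) * Real.cos (π * α) /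
          (Real.Gamma α ^ 2 * Real.cos (π * α / 2) ^ 2) - α| ≤ C * |α| ^ 3 := by
  have hπ := Real.pi_pos
  obtain ⟨c, hc, r₂, hr₂, hGq⟩ := Gq'_quad
  refine ⟨π ^ 2 + c, by positivity, min (min r₂ (1/2)) (1 / (c + 1)),
    by positivity, fun α hαr hα0 => ?_⟩
  have hrle1 : min (min r₂ (1/2)) (1 / (c + 1)) ≤ r₂ := le_trans (min_le_left _ _) (min_le_left _ _)
  have hrle2 : min (min r₂ (1/2)) (1 / (c + 1)) ≤ 1/2 := le_trans (min_le_left _ _) (min_le_right _ _)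
  have hrle3 : min (min r₂ (1/2)) (1 / (c + 1)) ≤ 1 / (c + 1) := min_le_right _ _
  have habs : |α| = -α := abs_of_neg hα0
  have hαr2 : |α| < r₂ := by rw [habs]; linarith
  have hαhalf : -(1/2 : ℝ) < α := by linarith
  have hαc : |α| < 1 / (c + 1) := by rw [habs]; linarith
  -- bound on Gq'
  have hG1 : |Gq' α - 1| ≤ c * α ^ 2 := hGq α hαr2
  have hGle : |Gq' α| ≤ 2 := by
    have h2 : c * α ^ 2 ≤ 1 := by
      have h3 : α ^ 2 < (1 / (c + 1)) ^ 2 := by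
        rw [← sq_abs]
        exact pow_lt_pow_left₀ hαc (abs_nonneg α) (by norm_num)
      have h4 : c * (1 / (c + 1)) ^ 2 ≤ 1 := by
        rw [div_pow, one_pow, mul_one_div, div_le_one (by positivity)]
        nlinarith
      nlinarith
    calc |Gq' α| = |(Gq' α - 1) + 1| := by ring_nf
      _ ≤ |Gq' α - 1| + 1 := by exact (abs_add_le _ _).trans (by simp)
      _ ≤ 2 := by linarith
  -- tan bound
  set x : ℝ := π * (-α) / 2 with hxdef
  have hxpos : 0 < x := by rw [hxdef]; nlinarith
  have hxle : x ≤ 1 := by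
    rw [hxdef]
    nlinarith [Real.pi_le_four]
  have htan : |Real.tan x - x| ≤ 2 * x ^ 3 := tan_cube_bound' hxpos.le hxle
  have hrw : 2/π * Real.tan (π * α / 2) - α = -(2/π) * (Real.tan x - x) := by
    rw [show π * α / 2 = -x by rw [hxdef]; ring, Real.tan_neg]
    field_simp
    ring
  have hx3 : x ^ 3 = (π/2) ^ 3 * |α| ^ 3 := by rw [hxdef, habs]; ring
  have hterm1 : |2/π * Real.tan (π * α / 2) - α| ≤ π ^ 2 / 2 * |α| ^ 3 := by
    rw [hrw, abs_mul, abs_neg, abs_of_pos (by positivity : (0:ℝ) < 2/π)]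
    calc 2/π * |Real.tan x - x| ≤ 2/π * (2 * x ^ 3) := by
          exact mul_le_mul_of_nonneg_left htan (by positivity)
      _ = π ^ 2 / 2 * |α| ^ 3 := by rw [hx3]; field_simp
  -- assemble
  rw [aCoeff_ident' hαhalf hα0]
  have hdecomp : 2 / π * Real.tan (π * α / 2) * Gq' α - α
      = (2 / π * Real.tan (π * α / 2) - α) * Gq' α + α * (Gq' α - 1) := by ring
  rw [hdecomp]
  have habs2 : |α| * (c * α ^ 2) = c * |α| ^ 3 := by
    rw [← sq_abs]
    ring
  calc |(2 / π * Real.tan (π * α / 2) - α) * Gq' α + α * (Gq' α - 1)|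
      ≤ |(2 / π * Real.tan (π * α / 2) - α) * Gq' α| + |α * (Gq' α - 1)| := abs_add_le _ _
    _ = |2 / π * Real.tan (π * α / 2) - α| * |Gq' α| + |α| * |Gq' α - 1| := by
        rw [abs_mul, abs_mul]
    _ ≤ (π ^ 2 / 2 * |α| ^ 3) * 2 + |α| * (c * α ^ 2) := by
        refine add_le_add ?_ ?_
        · exact mul_le_mul hterm1 hGle (abs_nonneg _) (by positivity)
        · exact mul_le_mul_of_nonneg_left hG1 (abs_nonneg _)
    _ = (π ^ 2 + c) * |α| ^ 3 := by rw [habs2]; ring
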